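/- Let d ≥ 3 and fix t ∈ (−1,1). Suppose there exists a unit vector w ∈ ℂ^{d−1} such that, taking V_m = 2|w⟩⟨w| − I_{d−1} for all m and A_m = S^{−(m−1)}(t ⊕ V_m)S^{m−1} (so each A_m is self-adjoint), the family {A_m A_n}_{m,n=1}^d is linearly independent. Then for almost every unit vector x ∈ ℂ^{d−1} — i.e., for all x outside a null set of the canonical surface measure on the unit sphere of ℂ^{d−1} ≅ ℝ^{2(d−1)} — taking V_m = 2|x⟩⟨x| − I_{d−1} for all m, the resulting family {A_m A_n}_{m,n=1}^d is linearly independent. -/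

import Mathlib

open MeasureTheory Matrix

noncomputable section

/-- The cyclic shift matrix `S = ∑_k |e_k⟩⟨e_{k+1}|` (indices mod `d`). -/
def cyclicShift (d : ℕ) : Matrix (Fin d) (Fin d) ℂ :=
  Matrix.of fun j k => if (k : ℕ) = ((j : ℕ) + 1) % d then 1 else 0

/-- The block-diagonal matrix `t ⊕ V ∈ M_d(ℂ)` with `(1,1)` entry `t` and lower-right
`(d−1)×(d−1)` block `V`. -/
def blockTV (d : ℕ) (t : ℂ) (V : Matrix (Fin (d - 1)) (Fin (d - 1)) ℂ) :
    Matrix (Fin d) (Fin d) ℂ :=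
  Matrix.of fun j k =>
    if h : (j : ℕ) = 0 ∨ (k : ℕ) = 0 then
      (if (j : ℕ) = 0 ∧ (k : ℕ) = 0 then t else 0)
    else V ⟨(j : ℕ) - 1, by have := j.isLt; omega⟩ ⟨(k : ℕ) - 1, by have := k.isLt; omega⟩

/-- `A_m = S^{−(m−1)} (t ⊕ V_m) S^{m−1}` (with `m : Fin d` corresponding to
`m+1 ∈ {1,…,d}`). -/
def keyA (d : ℕ) (t : ℂ) (V : Fin d → Matrix (Fin (d - 1)) (Fin (d - 1)) ℂ) (m : Fin d) :
    Matrix (Fin d) (Fin d) ℂ :=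
  ((cyclicShift d) ^ (m : ℕ))ᴴ * blockTV d t (V m) * (cyclicShift d) ^ (m : ℕ)

/-- The matrix `2|x⟩⟨x| − I_n` built from a vector `x ∈ ℂⁿ`; when `x` is a unit vector
this is unitary and self-adjoint. -/
def reflMat (n : ℕ) (x : EuclideanSpace ℂ (Fin n)) : Matrix (Fin n) (Fin n) ℂ :=
  Matrix.of fun j k => 2 * x j * (starRingEnd ℂ) (x k) - (if j = k then 1 else 0)

instance euclideanComplexMeasurableSpace (n : ℕ) :
    MeasurableSpace (EuclideanSpace ℂ (Fin n)) := borel _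

instance euclideanComplexBorelSpace (n : ℕ) :
    BorelSpace (EuclideanSpace ℂ (Fin n)) := ⟨rfl⟩

open scoped Pointwise

namespace LIAux

open MvPolynomial

lemma measurable_eval {σ α : Type*} [MeasurableSpace α]
    (p : MvPolynomial σ ℂ) {g : α → σ → ℂ} (hg : ∀ i, Measurable fun a => g a i) :
    Measurable fun a => eval (g a) p := by
  induction p using MvPolynomial.induction_on with
  | C c => simpa using measurable_const
  | add p q hp hq => simpa only [map_add, Pi.add_def] using hp.add hq
  | mul_X p i hp => simpa only [_root_.map_mul, eval_X, Pi.mul_def] using hp.mul (hg i)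

lemma zero_set_null_fin : ∀ (n : ℕ) (p : MvPolynomial (Fin n) ℂ), p ≠ 0 →
    (volume : Measure (Fin n → ℝ)) {v | eval (fun i => (v i : ℂ)) p = 0} = 0 := by
  intro n
  induction n with
  | zero =>
    intro p hp
    obtain ⟨c, rfl⟩ := MvPolynomial.C_surjective (Fin 0) p
    have hc : c ≠ 0 := fun h => hp (by simp [h])
    have : {v : Fin 0 → ℝ | eval (fun i => (v i : ℂ)) (C c) = 0} = ∅ := by
      ext v; simp [hc]
    rw [this]; exact measure_empty
  | succ n ih =>
    intro p hp
    set P := finSuccEquiv ℂ n p with hPdef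
    have hP0 : P ≠ 0 := fun h => hp ((finSuccEquiv ℂ n).injective (by simp [← hPdef, h]))
    obtain ⟨k, hk⟩ : ∃ k, P.coeff k ≠ 0 := by
      by_contra h
      push_neg at h
      exact hP0 (Polynomial.ext fun k => by simpa using h k)
    set T : Set (ℝ × (Fin n → ℝ)) :=
      {q | eval (Fin.cons (q.1 : ℂ) (fun i => (q.2 i : ℂ)) : Fin (n+1) → ℂ) p = 0} with hTdef
    have hmeasf : Measurable fun q : ℝ × (Fin n → ℝ) =>
        eval (Fin.cons (q.1 : ℂ) (fun i => (q.2 i : ℂ)) : Fin (n+1) → ℂ) p := by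
      apply measurable_eval
      intro i
      refine Fin.cases ?_ ?_ i
      · simpa [Function.comp_def] using Complex.measurable_ofReal.comp measurable_fst
      · intro j
        simpa [Function.comp_def] using Complex.measurable_ofReal.comp
          ((measurable_pi_apply j).comp measurable_snd)
    have hmeasT : MeasurableSet T := hmeasf (measurableSet_singleton 0)
    have harg : ∀ v : Fin (n+1) → ℝ,
        (Fin.cons ((v 0 : ℝ) : ℂ) (fun i => ((v ((0 : Fin (n+1)).succAbove i) : ℝ) : ℂ)) :
          Fin (n+1) → ℂ) = fun i => (v i : ℂ) := by
      intro v
      funext i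
      refine Fin.cases ?_ ?_ i
      · simp
      · intro j
        simp [Fin.zero_succAbove]
    have hset : {v : Fin (n+1) → ℝ | eval (fun i => (v i : ℂ)) p = 0}
        = (MeasurableEquiv.piFinSuccAbove (fun _ : Fin (n+1) => ℝ) 0) ⁻¹' T := by
      ext v
      change (eval fun i => ((v i : ℝ) : ℂ)) p = 0 ↔
        (eval (Fin.cons ((v 0 : ℝ) : ℂ)
          (fun i => ((v ((0 : Fin (n+1)).succAbove i) : ℝ) : ℂ)) : Fin (n+1) → ℂ)) p = 0
      rw [harg v]
    have hmp := measurePreserving_piFinSuccAbove (fun _ : Fin (n+1) => (volume : Measure ℝ)) 0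
    have hpre := hmp.measure_preimage hmeasT.nullMeasurableSet
    rw [← volume_pi] at hpre
    rw [hset, hpre, Measure.prod_apply_symm hmeasT]
    have hN := ih (P.coeff k) hk
    have hae : ∀ᵐ y ∂(volume : Measure (Fin n → ℝ)),
        (volume : Measure ℝ) ((fun x => (x, y)) ⁻¹' T) = 0 := by
      have hN' : ∀ᵐ y ∂(volume : Measure (Fin n → ℝ)),
          ¬ (eval (fun i => (y i : ℂ)) (P.coeff k) = 0) := by
        rw [ae_iff]
        simpa using hN
      filter_upwards [hN'] with y hy
      set q : Polynomial ℂ := Polynomial.map (eval fun i => (y i : ℂ)) P with hqdef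
      have hq0 : q ≠ 0 := by
        intro h
        apply hy
        have := congrArg (fun r => Polynomial.coeff r k) h
        simpa [hqdef, Polynomial.coeff_map] using this
      have hsub : ((fun x => (x, y)) ⁻¹' T)
          ⊆ (fun x : ℝ => (x : ℂ)) ⁻¹' {z | q.IsRoot z} := by
        intro x hx
        simp only [Set.mem_preimage, hTdef, Set.mem_setOf_eq] at hx ⊢
        rw [eval_eq_eval_mv_eval'] at hx
        exact hx
      refine measure_mono_null hsub ?_
      refine Set.Finite.measure_zero ?_ _
      exact (Polynomial.finite_setOf_isRoot hq0).preimage Complex.ofReal_injective.injOn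
    calc ∫⁻ y, (volume : Measure ℝ) ((fun x => (x, y)) ⁻¹' T)
          ∂(volume : Measure (Fin n → ℝ))
        = ∫⁻ _, 0 ∂(volume : Measure (Fin n → ℝ)) := lintegral_congr_ae hae
      _ = 0 := lintegral_zero

lemma zero_set_null {σ : Type*} [Fintype σ] (p : MvPolynomial σ ℂ) (hp : p ≠ 0) :
    (volume : Measure (σ → ℝ)) {v | eval (fun i => (v i : ℂ)) p = 0} = 0 := by
  classical
  let e : σ ≃ Fin (Fintype.card σ) := Fintype.equivFin σ
  set q := rename e p with hq
  have hq0 : q ≠ 0 := fun h => hp ((rename_injective e e.injective) (by simpa [hq] using h))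
  have hqmeas : MeasurableSet {u : Fin (Fintype.card σ) → ℝ |
      eval (fun i => (u i : ℂ)) q = 0} := by
    have : Measurable fun u : Fin (Fintype.card σ) → ℝ => eval (fun i => (u i : ℂ)) q :=
      measurable_eval q fun i => Complex.measurable_ofReal.comp (measurable_pi_apply i)
    exact this (measurableSet_singleton 0)
  have hE := volume_measurePreserving_piCongrLeft (fun _ : Fin (Fintype.card σ) => ℝ) e
  set F : ((σ → ℝ) ≃ᵐ (Fin (Fintype.card σ) → ℝ)) :=
    MeasurableEquiv.piCongrLeft (fun _ : Fin (Fintype.card σ) => ℝ) e with hF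
  have happ : ∀ (v : σ → ℝ) (s : σ), F v (e s) = v s := fun v s =>
    Equiv.piCongrLeft_apply_apply (fun _ => ℝ) e v s
  have hset : {v : σ → ℝ | eval (fun i => (v i : ℂ)) p = 0}
      = F ⁻¹' {u : Fin (Fintype.card σ) → ℝ | eval (fun i => (u i : ℂ)) q = 0} := by
    ext v
    simp only [Set.mem_setOf_eq, Set.mem_preimage, hq, eval_rename]
    have : ((fun i => ((F v i : ℝ) : ℂ)) ∘ e) = fun s => ((v s : ℝ) : ℂ) := by
      funext s
      simp [Function.comp, happ v s]
    rw [this]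
  rw [hset, hE.measure_preimage hqmeas.nullMeasurableSet]
  exact zero_set_null_fin _ q hq0

open MvPolynomial

/-! ### Function-level scalar objects -/

def nyC {m : ℕ} (y : EuclideanSpace ℂ (Fin m)) : ℂ := ∑ i, y i * (starRingEnd ℂ) (y i)

def reflMat2 (m : ℕ) (y : EuclideanSpace ℂ (Fin m)) : Matrix (Fin m) (Fin m) ℂ :=
  Matrix.of fun j k => 2 * y j * (starRingEnd ℂ) (y k) - (if j = k then nyC y else 0)

def bigM (d : ℕ) (t' : ℂ) (V : Matrix (Fin (d-1)) (Fin (d-1)) ℂ) :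
    Matrix (Fin d × Fin d) (Fin d × Fin d) ℂ :=
  Matrix.of fun p q => (keyA d t' (fun _ => V) p.1 * keyA d t' (fun _ => V) p.2) q.1 q.2

def Gfun (d : ℕ) (t : ℝ) (y : EuclideanSpace ℂ (Fin (d-1))) : ℂ :=
  (bigM d ((t : ℂ) * nyC y) (reflMat2 (d-1) y)).det

lemma li_iff (d : ℕ) (t' : ℂ) (V : Matrix (Fin (d-1)) (Fin (d-1)) ℂ) :
    LinearIndependent ℂ (fun p : Fin d × Fin d =>
      keyA d t' (fun _ => V) p.1 * keyA d t' (fun _ => V) p.2) ↔ (bigM d t' V).det ≠ 0 := by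
  classical
  let L : Matrix (Fin d) (Fin d) ℂ →ₗ[ℂ] (Fin d × Fin d → ℂ) :=
    { toFun := fun A q => A q.1 q.2
      map_add' := fun _ _ => rfl
      map_smul' := fun _ _ => rfl }
  have hL : LinearMap.ker L = ⊥ := by
    rw [LinearMap.ker_eq_bot]
    intro A B h
    ext j k
    exact congrFun h (j, k)
  rw [← LinearMap.linearIndependent_iff (v := fun p : Fin d × Fin d =>
    keyA d t' (fun _ => V) p.1 * keyA d t' (fun _ => V) p.2) L hL]
  rw [show (⇑L ∘ fun p : Fin d × Fin d =>
      keyA d t' (fun _ => V) p.1 * keyA d t' (fun _ => V) p.2)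
      = (bigM d t' V).row from rfl]
  rw [Matrix.linearIndependent_rows_iff_isUnit, Matrix.isUnit_iff_isUnit_det, isUnit_iff_ne_zero]

lemma nyC_eq_one {m : ℕ} {x : EuclideanSpace ℂ (Fin m)} (hx : ‖x‖ = 1) : nyC x = 1 := by
  have h0 : (0:ℝ) ≤ ∑ i, ‖x i‖^2 := Finset.sum_nonneg fun i _ => sq_nonneg _
  have h2 : ∑ i, ‖x i‖^2 = 1 := by
    have h := EuclideanSpace.norm_eq x
    rw [hx] at h
    have := Real.sq_sqrt h0
    rw [← h] at this
    simpa using this.symm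
  unfold nyC
  calc ∑ i, x i * (starRingEnd ℂ) (x i) = ∑ i, ((‖x i‖^2 : ℝ) : ℂ) := by
        refine Finset.sum_congr rfl fun i _ => ?_
        rw [Complex.mul_conj]
        norm_cast
        rw [Complex.normSq_eq_norm_sq]
    _ = ((∑ i, ‖x i‖^2 : ℝ) : ℂ) := by push_cast; ring
    _ = 1 := by rw [h2]; norm_num

lemma reflMat2_eq {m : ℕ} {x : EuclideanSpace ℂ (Fin m)} (hx : ‖x‖ = 1) :
    reflMat2 m x = reflMat m x := by
  ext j k
  simp [reflMat2, reflMat, nyC_eq_one hx]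

lemma Gfun_eq_of_norm_one (d : ℕ) (t : ℝ) {x : EuclideanSpace ℂ (Fin (d-1))} (hx : ‖x‖ = 1) :
    Gfun d t x = (bigM d (t : ℂ) (reflMat (d-1) x)).det := by
  unfold Gfun
  rw [nyC_eq_one hx, mul_one, reflMat2_eq hx]

/-! ### Scaling -/

def blockP {R : Type*} [CommSemiring R] (d : ℕ) (t : R)
    (V : Matrix (Fin (d-1)) (Fin (d-1)) R) : Matrix (Fin d) (Fin d) R :=
  Matrix.of fun j k =>
    if _h : (j : ℕ) = 0 ∨ (k : ℕ) = 0 then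
      (if (j : ℕ) = 0 ∧ (k : ℕ) = 0 then t else 0)
    else V ⟨(j : ℕ) - 1, by have := j.isLt; omega⟩ ⟨(k : ℕ) - 1, by have := k.isLt; omega⟩

lemma blockTV_eq_blockP (d : ℕ) (t : ℂ) (V : Matrix (Fin (d-1)) (Fin (d-1)) ℂ) :
    blockTV d t V = blockP d t V := rfl

lemma blockP_map {R S : Type*} [CommSemiring R] [CommSemiring S] (f : R →+* S)
    (d : ℕ) (t : R) (V : Matrix (Fin (d-1)) (Fin (d-1)) R) :
    (blockP d t V).map f = blockP d (f t) (V.map f) := by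
  ext j k
  simp only [blockP, Matrix.map_apply, Matrix.of_apply]
  split_ifs with h1 h2 <;> simp [Matrix.map_apply]

lemma blockP_smul (d : ℕ) (c t : ℂ) (V : Matrix (Fin (d-1)) (Fin (d-1)) ℂ) :
    blockP d (c * t) (c • V) = c • blockP d t V := by
  ext j k
  simp only [blockP, Matrix.smul_apply, Matrix.of_apply, smul_eq_mul]
  split_ifs with h1 h2 <;> simp [Matrix.smul_apply, smul_eq_mul]

lemma keyA_smul (d : ℕ) (c t : ℂ) (V : Matrix (Fin (d-1)) (Fin (d-1)) ℂ) (mi : Fin d) :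
    keyA d (c * t) (fun _ => c • V) mi = c • keyA d t (fun _ => V) mi := by
  unfold keyA
  rw [blockTV_eq_blockP, blockTV_eq_blockP, blockP_smul]
  rw [Matrix.mul_smul, Matrix.smul_mul]

lemma bigM_smul (d : ℕ) (c t : ℂ) (V : Matrix (Fin (d-1)) (Fin (d-1)) ℂ) :
    bigM d (c * t) (c • V) = (c * c) • bigM d t V := by
  ext p q
  simp only [bigM, Matrix.of_apply, Matrix.smul_apply, smul_eq_mul]
  rw [keyA_smul, keyA_smul, Matrix.smul_mul, Matrix.mul_smul, smul_smul]
  simp [Matrix.smul_apply]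

lemma Gfun_smul_eq_zero (d : ℕ) (t : ℝ) (r : ℝ) {y : EuclideanSpace ℂ (Fin (d-1))}
    (hy : Gfun d t y = 0) : Gfun d t (r • y) = 0 := by
  have hsm : ∀ i, (r • y) i = (r : ℂ) * y i := fun i => by
    rw [PiLp.smul_apply, Complex.real_smul]
  have hny : nyC (r • y) = ((r : ℂ) * (r : ℂ)) * nyC y := by
    unfold nyC
    rw [Finset.mul_sum]
    refine Finset.sum_congr rfl fun i _ => ?_
    rw [hsm i, _root_.map_mul, Complex.conj_ofReal]
    ring
  have hrefl : reflMat2 (d-1) (r • y) = ((r:ℂ) * (r:ℂ)) • reflMat2 (d-1) y := by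
    ext j k
    simp only [reflMat2, Matrix.of_apply, Matrix.smul_apply, smul_eq_mul, hsm, _root_.map_mul,
      Complex.conj_ofReal, hny]
    by_cases hjk : j = k <;> simp [hjk] <;> ring
  unfold Gfun at hy ⊢
  rw [show ((t:ℂ) * nyC (r • y)) = ((r:ℂ)*(r:ℂ)) * ((t:ℂ) * nyC y) by rw [hny]; ring, hrefl,
    bigM_smul, Matrix.det_smul, hy, mul_zero]

/-! ### Polynomial representation -/

def ZvP (m : ℕ) (i : Fin m) : MvPolynomial (Fin m ⊕ Fin m) ℂ :=
  X (.inl i) + X (.inr i) * C Complex.I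

def ZcP (m : ℕ) (i : Fin m) : MvPolynomial (Fin m ⊕ Fin m) ℂ :=
  X (.inl i) - X (.inr i) * C Complex.I

def nyP (m : ℕ) : MvPolynomial (Fin m ⊕ Fin m) ℂ := ∑ i, ZvP m i * ZcP m i

def reflP (m : ℕ) : Matrix (Fin m) (Fin m) (MvPolynomial (Fin m ⊕ Fin m) ℂ) :=
  Matrix.of fun j k => 2 * ZvP m j * ZcP m k - (if j = k then nyP m else 0)

def CC (m : ℕ) : ℂ →+* MvPolynomial (Fin m ⊕ Fin m) ℂ := C

def AP (d : ℕ) (t : ℝ) (mi : Fin d) :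
    Matrix (Fin d) (Fin d) (MvPolynomial (Fin (d-1) ⊕ Fin (d-1)) ℂ) :=
  (((cyclicShift d ^ (mi : ℕ))ᴴ).map (CC (d-1))) *
    blockP d (CC (d-1) ((t : ℂ)) * nyP (d-1)) (reflP (d-1)) *
    ((cyclicShift d ^ (mi : ℕ)).map (CC (d-1)))

def MP (d : ℕ) (t : ℝ) :
    Matrix (Fin d × Fin d) (Fin d × Fin d) (MvPolynomial (Fin (d-1) ⊕ Fin (d-1)) ℂ) :=
  Matrix.of fun p q => (AP d t p.1 * AP d t p.2) q.1 q.2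

def PP (d : ℕ) (t : ℝ) : MvPolynomial (Fin (d-1) ⊕ Fin (d-1)) ℂ := (MP d t).det

def coordC {m : ℕ} (v : Fin m ⊕ Fin m → ℝ) : EuclideanSpace ℂ (Fin m) :=
  WithLp.toLp 2 (fun i => { re := v (.inl i), im := v (.inr i) })

def evalv (m : ℕ) (v : Fin m ⊕ Fin m → ℝ) : MvPolynomial (Fin m ⊕ Fin m) ℂ →+* ℂ :=
  eval (fun s => ((v s : ℝ) : ℂ))

lemma evalv_C (m : ℕ) (v : Fin m ⊕ Fin m → ℝ) (z : ℂ) : evalv m v (CC m z) = z := by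
  simp [evalv, CC]

lemma evalv_Zv (m : ℕ) (v : Fin m ⊕ Fin m → ℝ) (i : Fin m) :
    evalv m v (ZvP m i) = coordC v i := by
  simp only [evalv, ZvP, map_add, _root_.map_mul, eval_X, eval_C]
  apply Complex.ext <;> simp [coordC]

lemma evalv_Zc (m : ℕ) (v : Fin m ⊕ Fin m → ℝ) (i : Fin m) :
    evalv m v (ZcP m i) = (starRingEnd ℂ) (coordC v i) := by
  simp only [evalv, ZcP, map_sub, _root_.map_mul, eval_X, eval_C]
  apply Complex.ext <;> simp [coordC]

lemma evalv_nyP (m : ℕ) (v : Fin m ⊕ Fin m → ℝ) : evalv m v (nyP m) = nyC (coordC v) := by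
  simp only [nyP, map_sum, _root_.map_mul, evalv_Zv, evalv_Zc, nyC]

lemma reflP_map (m : ℕ) (v : Fin m ⊕ Fin m → ℝ) :
    (reflP m).map (evalv m v) = reflMat2 m (coordC v) := by
  ext j k
  simp only [reflP, reflMat2, Matrix.map_apply, Matrix.of_apply, map_sub, _root_.map_mul,
    map_ofNat, apply_ite (evalv m v), map_zero, evalv_Zv, evalv_Zc, evalv_nyP]

lemma constmat_map {m d : ℕ} (v : Fin m ⊕ Fin m → ℝ) (M : Matrix (Fin d) (Fin d) ℂ) :
    (M.map (CC m)).map (evalv m v) = M := by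
  ext i j
  simp [Matrix.map_apply, evalv_C]

lemma AP_map (d : ℕ) (t : ℝ) (v : Fin (d-1) ⊕ Fin (d-1) → ℝ) (mi : Fin d) :
    ((evalv (d-1) v).mapMatrix (AP d t mi)) =
      keyA d ((t : ℂ) * nyC (coordC v)) (fun _ => reflMat2 (d-1) (coordC v)) mi := by
  unfold AP keyA
  rw [_root_.map_mul, _root_.map_mul]
  simp only [RingHom.mapMatrix_apply]
  rw [constmat_map, constmat_map, blockTV_eq_blockP, blockP_map, _root_.map_mul, evalv_C,
    evalv_nyP, reflP_map]

lemma PP_eval (d : ℕ) (t : ℝ) (v : Fin (d-1) ⊕ Fin (d-1) → ℝ) :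
    evalv (d-1) v (PP d t) = Gfun d t (coordC v) := by
  unfold PP Gfun
  rw [RingHom.map_det]
  congr 1
  ext p q
  calc (evalv (d-1) v).mapMatrix (MP d t) p q
      = ((evalv (d-1) v).mapMatrix (AP d t p.1 * AP d t p.2)) q.1 q.2 := rfl
    _ = ((evalv (d-1) v).mapMatrix (AP d t p.1) *
          (evalv (d-1) v).mapMatrix (AP d t p.2)) q.1 q.2 := by rw [_root_.map_mul]
    _ = bigM d ((t : ℂ) * nyC (coordC v)) (reflMat2 (d-1) (coordC v)) p q := by
        rw [AP_map, AP_map]; rfl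

/-! ### The linear equivalence with the real coordinate space -/

def psiLin (m : ℕ) : ((Fin m ⊕ Fin m) → ℝ) ≃ₗ[ℝ] EuclideanSpace ℂ (Fin m) where
  toFun := coordC
  invFun x := Sum.elim (fun i => (x i).re) (fun i => (x i).im)
  map_add' v w := by
    ext i
    apply Complex.ext <;> simp [coordC, PiLp.add_apply]
  map_smul' r v := by
    ext i
    apply Complex.ext <;>
      simp [coordC, PiLp.smul_apply, Complex.real_smul, Complex.mul_re, Complex.mul_im]
  left_inv v := by funext s; cases s <;> rfl
  right_inv x := by ext i; rfl

end LIAux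

/-- Suppose that for some unit vector `w ∈ ℂ^{d−1}`, taking `V_m = 2|w⟩⟨w| − I` for all
`m`, the family `{A_m A_n}` is linearly independent. Then for almost every unit vector
`x ∈ ℂ^{d−1}` (w.r.t. the canonical surface measure on the unit sphere of
`ℂ^{d−1} ≅ ℝ^{2(d−1)}`, obtained from an additive Haar measure `μ` via `μ.toSphere`),
taking `V_m = 2|x⟩⟨x| − I` for all `m`, the family `{A_m A_n}` is linearly independent. -/
theorem linearIndependent_ae_sphere (d : ℕ) (hd : 3 ≤ d) (t : ℝ)
    (ht : t ∈ Set.Ioo (-1 : ℝ) 1)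
    (hw : ∃ w : EuclideanSpace ℂ (Fin (d - 1)), ‖w‖ = 1 ∧
      LinearIndependent ℂ (fun p : Fin d × Fin d =>
        keyA d (t : ℂ) (fun _ => reflMat (d - 1) w) p.1 *
          keyA d (t : ℂ) (fun _ => reflMat (d - 1) w) p.2))
    (μ : Measure (EuclideanSpace ℂ (Fin (d - 1)))) (hμ : μ.IsAddHaarMeasure) :
    μ.toSphere {x : Metric.sphere (0 : EuclideanSpace ℂ (Fin (d - 1))) 1 |
      ¬ LinearIndependent ℂ (fun p : Fin d × Fin d =>
        keyA d (t : ℂ) (fun _ => reflMat (d - 1) (x : EuclideanSpace ℂ (Fin (d - 1)))) p.1 *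
          keyA d (t : ℂ)
            (fun _ => reflMat (d - 1) (x : EuclideanSpace ℂ (Fin (d - 1)))) p.2)} = 0 := by
  classical
  obtain ⟨w, hw1, hwLI⟩ := hw
  haveI := hμ
  set Z : Set (EuclideanSpace ℂ (Fin (d - 1))) := {y | LIAux.Gfun d t y = 0} with hZ
  set p : MvPolynomial (Fin (d-1) ⊕ Fin (d-1)) ℂ := LIAux.PP d t with hpdef
  have hrep : ∀ v : Fin (d-1) ⊕ Fin (d-1) → ℝ,
      MvPolynomial.eval (fun s => ((v s : ℝ) : ℂ)) p = LIAux.Gfun d t (LIAux.coordC v) :=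
    fun v => LIAux.PP_eval d t v
  have hGw : LIAux.Gfun d t w ≠ 0 := by
    rw [LIAux.Gfun_eq_of_norm_one d t hw1]
    exact (LIAux.li_iff d (t : ℂ) (reflMat (d - 1) w)).mp hwLI
  have hp0 : p ≠ 0 := by
    intro h
    apply hGw
    have hcw : LIAux.coordC (Sum.elim (fun i => (w i).re) (fun i => (w i).im)) = w :=
      rfl
    have h2 := hrep (Sum.elim (fun i => (w i).re) (fun i => (w i).im))
    rw [h, hcw, map_zero] at h2
    exact h2.symm
  have hmeasEvalSet : MeasurableSet {v : Fin (d-1) ⊕ Fin (d-1) → ℝ |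
      MvPolynomial.eval (fun s => ((v s : ℝ) : ℂ)) p = 0} :=
    (LIAux.measurable_eval p fun s =>
      Complex.measurable_ofReal.comp (measurable_pi_apply s)) (measurableSet_singleton 0)
  haveI : T2Space (EuclideanSpace ℂ (Fin (d - 1))) := inferInstance
  let ψ := (LIAux.psiLin (d - 1)).toContinuousLinearEquiv
  have hψcoe : ∀ v, ψ v = LIAux.coordC v := fun _ => rfl
  have hZeq : Z = (⇑ψ.symm) ⁻¹' {v | MvPolynomial.eval (fun s => ((v s : ℝ) : ℂ)) p = 0} := by
    ext y
    simp only [Set.mem_preimage, Set.mem_setOf_eq, hrep, hZ]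
    rw [show LIAux.coordC (ψ.symm y) = ψ (ψ.symm y) from rfl, ψ.apply_symm_apply]
  have hZmeas : MeasurableSet Z := by
    rw [hZeq]
    exact ψ.symm.continuous.measurable hmeasEvalSet
  have hμZ : μ Z = 0 := by
    haveI : ((volume : Measure (Fin (d-1) ⊕ Fin (d-1) → ℝ)).map
        ⇑ψ).IsAddHaarMeasure :=
      ψ.isAddHaarMeasure_map _
    have huniq := μ.isAddLeftInvariant_eq_smul
      ((volume : Measure (Fin (d-1) ⊕ Fin (d-1) → ℝ)).map ⇑ψ)
    rw [huniq, Measure.smul_apply,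
      Measure.map_apply ψ.continuous.measurable hZmeas]
    have hpre : ⇑ψ ⁻¹' Z
        = {v | MvPolynomial.eval (fun s => ((v s : ℝ) : ℂ)) p = 0} := by
      ext v
      simp only [Set.mem_preimage, hZ, Set.mem_setOf_eq, hrep]
      rfl
    rw [hpre, LIAux.zero_set_null p hp0, smul_zero]
  have hsetEq : {x : Metric.sphere (0 : EuclideanSpace ℂ (Fin (d - 1))) 1 |
      ¬ LinearIndependent ℂ (fun p : Fin d × Fin d =>
        keyA d (t : ℂ) (fun _ => reflMat (d - 1) (x : EuclideanSpace ℂ (Fin (d - 1)))) p.1 *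
          keyA d (t : ℂ) (fun _ => reflMat (d - 1) (x : EuclideanSpace ℂ (Fin (d - 1)))) p.2)}
      = Subtype.val ⁻¹' Z := by
    ext x
    have hx : ‖(x : EuclideanSpace ℂ (Fin (d - 1)))‖ = 1 := by
      have := x.2
      rwa [mem_sphere_zero_iff_norm] at this
    simp only [Set.mem_setOf_eq, Set.mem_preimage, hZ]
    rw [LIAux.li_iff d (t : ℂ) (reflMat (d - 1) (x : EuclideanSpace ℂ (Fin (d - 1)))),
      LIAux.Gfun_eq_of_norm_one d t hx, not_not]
  rw [hsetEq]
  have hsub : MeasurableSet (Subtype.val ⁻¹' Z : Set (Metric.sphere (0 : EuclideanSpace ℂ (Fin (d - 1))) 1)) :=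
    measurable_subtype_coe hZmeas
  rw [μ.toSphere_apply' hsub]
  have hcone : μ (Set.Ioo (0:ℝ) 1 • (Subtype.val '' (Subtype.val ⁻¹' Z :
      Set (Metric.sphere (0 : EuclideanSpace ℂ (Fin (d - 1))) 1)))) = 0 := by
    refine measure_mono_null ?_ hμZ
    rintro z hz
    rw [Set.mem_smul] at hz
    obtain ⟨r, hr, y, hy, rfl⟩ := hz
    obtain ⟨x, hxZ, rfl⟩ := hy
    exact LIAux.Gfun_smul_eq_zero d t r hxZ
  rw [hcone, mul_zero]

end
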